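/- Let p be a positive integer, k coprime to p, w = 2πk/p, and let a, b be integers with cos(w(a−b)/2) ≠ 0. Then over residues c ∈ {0,...,p−1}, the Pizza logit Q(c) = |cos(w(a−b)/2)| · cos(w(a+b−c)) is uniquely maximized at c ≡ a + b (mod p). -/

import Mathlib

theorem pizza_argmax (p : ℕ) (hp : 0 < p) (k : ℤ) (hk : Int.gcd k (p : ℤ) = 1)
    (a b : ℤ)
    (hab : Real.cos ((2 * Real.pi * k / p) * ((a : ℝ) - b) / 2) ≠ 0) :
    ∀ c ∈ Finset.range p, (c : ℤ) ≡ a + b [ZMOD (p : ℤ)] →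
      ∀ c' ∈ Finset.range p, c' ≠ c →
        |Real.cos ((2 * Real.pi * k / p) * ((a : ℝ) - b) / 2)| *
            Real.cos ((2 * Real.pi * k / p) * ((a : ℝ) + b - c')) <
          |Real.cos ((2 * Real.pi * k / p) * ((a : ℝ) - b) / 2)| *
            Real.cos ((2 * Real.pi * k / p) * ((a : ℝ) + b - c)) := by
  intro c hc hmod c' hc' hne
  have hp0 : (p : ℝ) ≠ 0 := by positivity
  have habs : 0 < |Real.cos ((2 * Real.pi * k / p) * ((a : ℝ) - b) / 2)| :=
    abs_pos.mpr hab
  -- cos at c equals 1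
  have hdvd : (p : ℤ) ∣ (a + b - c) := (Int.ModEq.dvd hmod)
  obtain ⟨m, hm⟩ := hdvd
  have h1 : Real.cos ((2 * Real.pi * k / p) * ((a : ℝ) + b - c)) = 1 := by
    have : ((a : ℝ) + b - c) = (m : ℝ) * p := by
      have := congrArg (fun z : ℤ => (z : ℝ)) hm
      push_cast at this
      linarith
    rw [this]
    have : (2 * Real.pi * k / p) * ((m : ℝ) * p) = (k * m : ℤ) * (2 * Real.pi) := by
      field_simp; push_cast; ring
    rw [this, Real.cos_int_mul_two_pi]
  -- cos at c' is < 1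
  have h2 : Real.cos ((2 * Real.pi * k / p) * ((a : ℝ) + b - c')) < 1 := by
    rcases lt_or_eq_of_le (Real.cos_le_one _) with h | h
    · exact h
    · exfalso
      rw [Real.cos_eq_one_iff] at h
      obtain ⟨n, hn⟩ := h
      have key : (n : ℝ) * p = (k : ℝ) * ((a : ℝ) + b - c') := by
        have h' : (n : ℝ) * (2 * Real.pi) * p = (2 * Real.pi * k) * ((a : ℝ) + b - c') := by
          field_simp at hn ⊢
          nlinarith [hn]
        have hpi : (0:ℝ) < Real.pi := Real.pi_pos
        nlinarith [h']
      have keyZ : n * (p : ℤ) = k * (a + b - c') := by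
        exact_mod_cast key
      have hdvd' : (p : ℤ) ∣ k * (a + b - c') := ⟨n, by linarith [keyZ]⟩
      have hcop : IsCoprime (p : ℤ) k := by
        rw [Int.isCoprime_iff_gcd_eq_one, Int.gcd_comm]
        exact hk
      have hdvd'' : (p : ℤ) ∣ (a + b - c') := hcop.dvd_of_dvd_mul_left hdvd'
      -- then c ≡ c' mod p and both in [0, p), so c = c'
      have hcc' : (p : ℤ) ∣ ((c' : ℤ) - c) := by
        have : ((c' : ℤ) - c) = (a + b - c) - (a + b - c') := by ring
        rw [this]
        exact dvd_sub ⟨m, hm⟩ hdvd''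
      have hclt := Finset.mem_range.mp hc
      have hc'lt := Finset.mem_range.mp hc'
      have : (c' : ℤ) = c := by
        have habs' : |(c' : ℤ) - c| < p := by
          rw [abs_sub_lt_iff]
          constructor <;> omega
        have := Int.eq_zero_of_abs_lt_dvd hcc' habs'
        omega
      exact hne (by exact_mod_cast this)
  rw [h1]
  calc |Real.cos ((2 * Real.pi * k / p) * ((a : ℝ) - b) / 2)| *
        Real.cos ((2 * Real.pi * k / p) * ((a : ℝ) + b - c'))
      < |Real.cos ((2 * Real.pi * k / p) * ((a : ℝ) - b) / 2)| * 1 := by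
        exact mul_lt_mul_of_pos_left h2 habs
    _ = _ := by ring
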